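/- For every integer r ≥ 1, ₍ᵣ₊₃₎F₍ᵣ₊₂₎({1}_{r+1}, 3/2, 3/2; {2}_{r+2}; 1) = (8(−1)^{r−1}/(π (r−1)!)) · ∫₀¹ (K(t) − π/2) · log^{r−1}(t) / t dt. -/

import Mathlib

open scoped BigOperators
open scoped Real
open Filter

/-- Pochhammer symbol `(x)_n = x (x+1) ⋯ (x+n-1)` for a real `x`. -/
noncomputable def poch (x : ℝ) (n : ℕ) : ℝ := ∏ i ∈ Finset.range n, (x + i)

/-- The generalized hypergeometric series `ₚF_q(a; b; z)`, where the numerator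
parameters are the entries of the list `a` and the denominator parameters are
the entries of the list `b`. -/
noncomputable def hyp (a b : List ℝ) (z : ℝ) : ℝ :=
  ∑' n : ℕ, ((a.map fun x => poch x n).prod / (b.map fun x => poch x n).prod)
    * z ^ n / (n.factorial : ℝ)

/-- The complete elliptic integral of the first kind, in the parameter
(`m = k²`) convention: `K(m) = ∫₀^{π/2} (1 − m sin²θ)^{−1/2} dθ`. -/
noncomputable def ellipticK (m : ℝ) : ℝ :=
  ∫ θ in (0:ℝ)..(π / 2), (1 - m * Real.sin θ ^ 2) ^ (-(1:ℝ) / 2)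

open Filter MeasureTheory intervalIntegral

noncomputable def W (n : ℕ) : ℝ := ∏ i ∈ Finset.range n, (2*(i:ℝ)+1)/(2*i+2)

lemma W_zero : W 0 = 1 := by simp [W]

lemma W_succ (n : ℕ) : W (n+1) = W n * ((2*(n:ℝ)+1)/(2*n+2)) := by
  rw [W, Finset.prod_range_succ, ← W]

lemma W_pos (n : ℕ) : 0 < W n := by
  apply Finset.prod_pos; intro i _; positivity

lemma W_le_one (n : ℕ) : W n ≤ 1 := by
  apply Finset.prod_le_one
  · intro i _; positivity
  · intro i _; rw [div_le_one (by positivity)]; linarith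

lemma W_sq_le (n : ℕ) : W n ^ 2 ≤ 1/(2*(n:ℝ)+1) := by
  have h : W n ^ 2 ≤ ∏ i ∈ Finset.range n, (2*(i:ℝ)+1)/(2*i+3) := by
    rw [W, ← Finset.prod_pow]
    apply Finset.prod_le_prod
    · intro i _; positivity
    · intro i _
      rw [div_pow, div_le_div_iff₀ (by positivity) (by positivity)]
      ring_nf
      nlinarith [sq_nonneg ((i:ℝ))]
  have h2 : ∀ m : ℕ, ∏ i ∈ Finset.range m, (2*(i:ℝ)+1)/(2*i+3) = 1/(2*(m:ℝ)+1) := by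
    intro m
    induction m with
    | zero => simp
    | succ m ih =>
      rw [Finset.prod_range_succ, ih]
      push_cast
      field_simp
      ring
  rw [h2 n] at h; exact h

lemma W_mul_succ (k : ℕ) : ((k:ℝ)+1) * W (k+1) = ((k:ℝ)+1/2) * W k := by
  rw [W_succ]; field_simp

lemma poch_one (n : ℕ) : poch 1 n = n.factorial := by
  induction n with
  | zero => simp [poch]
  | succ m ih => rw [poch, Finset.prod_range_succ, ← poch, ih]; push_cast [Nat.factorial_succ]; ring

lemma poch_two (n : ℕ) : poch 2 n = (n+1).factorial := by
  induction n with
  | zero => simp [poch]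
  | succ m ih => rw [poch, Finset.prod_range_succ, ← poch, ih]; push_cast [Nat.factorial_succ]; ring

lemma poch_half (n : ℕ) : poch (1/2) n = W n * n.factorial := by
  induction n with
  | zero => simp [poch, W]
  | succ m ih =>
    rw [poch, Finset.prod_range_succ, ← poch, ih, W_succ]
    push_cast [Nat.factorial_succ]
    field_simp
    ring

lemma poch_threehalf (n : ℕ) : poch (3/2) n = 2 * W (n+1) * (n+1).factorial := by
  have h : poch (1/2) (n+1) = (1/2) * poch (3/2) n := by
    simp only [poch]
    rw [Finset.prod_range_succ']
    have hc : ∀ i ∈ Finset.range n, ((1:ℝ)/2 + (↑(i+1) : ℕ)) = (3/2 + i) := by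
      intro i _; push_cast; ring
    rw [Finset.prod_congr rfl hc]
    norm_num [mul_comm]
  have := poch_half (n+1)
  rw [h] at this
  linarith

lemma sum_reflect_aux (n : ℕ) :
    ∑ k ∈ Finset.range (n+1), (k:ℝ) * (W k * W (n-k))
      = ∑ k ∈ Finset.range (n+1), ((n:ℝ)-k) * (W k * W (n-k)) := by
  rw [← Finset.sum_range_reflect]
  apply Finset.sum_congr rfl
  intro k hk
  rw [Finset.mem_range] at hk
  have hk' : k ≤ n := Nat.lt_succ_iff.mp hk
  have h1 : n + 1 - 1 - k = n - k := by omega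
  have h2 : n - (n - k) = k := by omega
  rw [h1, h2]
  have : ((n - k : ℕ) : ℝ) = (n:ℝ) - k := by
    rw [Nat.cast_sub hk']
  rw [this]
  ring

lemma W_conv (n : ℕ) : ∑ k ∈ Finset.range (n+1), W k * W (n-k) = 1 := by
  induction n with
  | zero => simp [W]
  | succ n ih =>
    have e2 : ∑ k ∈ Finset.range (n+2), ((k:ℝ) + ((n:ℝ)+1-k)) * (W k * W (n+1-k))
        = 2 * ∑ k ∈ Finset.range (n+2), (k:ℝ) * (W k * W (n+1-k)) := by
      have hrefl := sum_reflect_aux (n+1)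
      push_cast at hrefl
      rw [two_mul]
      nth_rewrite 2 [hrefl]
      rw [← Finset.sum_add_distrib]
      apply Finset.sum_congr rfl; intro k _; ring
    have e3 : ∑ k ∈ Finset.range (n+2), (k:ℝ) * (W k * W (n+1-k))
        = ∑ j ∈ Finset.range (n+1), ((j:ℝ)+1/2) * (W j * W (n-j)) := by
      rw [Finset.sum_range_succ']
      simp only [Nat.cast_zero, zero_mul, add_zero]
      apply Finset.sum_congr rfl
      intro j _
      have h1 : n + 1 - (j+1) = n - j := by omega
      rw [h1]
      push_cast
      linear_combination (W_mul_succ j) * W (n-j)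
    have e5 : 2 * ∑ j ∈ Finset.range (n+1), (j:ℝ) * (W j * W (n-j))
        = (n:ℝ) * ∑ j ∈ Finset.range (n+1), W j * W (n-j) := by
      have hrefl := sum_reflect_aux n
      rw [two_mul]
      nth_rewrite 2 [hrefl]
      rw [← Finset.sum_add_distrib, Finset.mul_sum]
      apply Finset.sum_congr rfl; intro j _; ring
    have key : ((n:ℝ)+1) * ∑ k ∈ Finset.range (n+2), W k * W (n+1-k)
        = ((n:ℝ)+1) * ∑ k ∈ Finset.range (n+1), W k * W (n-k) := by
      have e1 : ((n:ℝ)+1) * ∑ k ∈ Finset.range (n+2), W k * W (n+1-k)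
          = ∑ k ∈ Finset.range (n+2), ((k:ℝ) + ((n:ℝ)+1-k)) * (W k * W (n+1-k)) := by
        rw [Finset.mul_sum]
        apply Finset.sum_congr rfl; intro k _; ring
      have e4 : ∑ j ∈ Finset.range (n+1), ((j:ℝ)+1/2) * (W j * W (n-j))
          = (∑ j ∈ Finset.range (n+1), (j:ℝ) * (W j * W (n-j)))
            + (1/2) * ∑ j ∈ Finset.range (n+1), W j * W (n-j) := by
        rw [Finset.mul_sum, ← Finset.sum_add_distrib]
        apply Finset.sum_congr rfl; intro j _; ring
      rw [e1, e2, e3, e4, mul_add]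
      linarith [e5]
    rw [ih] at key
    have hne : ((n:ℝ)+1) ≠ 0 := by positivity
    rw [mul_one] at key
    field_simp at key
    linarith [key]

lemma W_summable {x : ℝ} (hx0 : 0 ≤ x) (hx1 : x < 1) : Summable (fun n => W n * x^n) := by
  apply Summable.of_nonneg_of_le (fun n => mul_nonneg (W_pos n).le (pow_nonneg hx0 n))
    (fun n => ?_) (summable_geometric_of_lt_one hx0 hx1)
  calc W n * x^n ≤ 1 * x^n := by
        apply mul_le_mul_of_nonneg_right (W_le_one n) (by positivity)
    _ = x^n := one_mul _

lemma hasSum_W {x : ℝ} (hx0 : 0 ≤ x) (hx1 : x < 1) :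
    HasSum (fun n => W n * x^n) ((1-x) ^ (-(1:ℝ)/2)) := by
  have hs := W_summable hx0 hx1
  set L := ∑' n, W n * x^n with hL
  have hnorm : Summable (fun n => ‖W n * x^n‖) := by
    have he : ∀ n : ℕ, ‖W n * x^n‖ = W n * x^n :=
      fun n => Real.norm_of_nonneg (mul_nonneg (W_pos n).le (pow_nonneg hx0 n))
    rw [show (fun n : ℕ => ‖W n * x^n‖) = fun n => W n * x^n from funext he]
    exact hs
  have hsq : L * L = (1-x)⁻¹ := by
    rw [hL, tsum_mul_tsum_eq_tsum_sum_range_of_summable_norm hnorm hnorm]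
    have : ∀ n : ℕ, (∑ k ∈ Finset.range (n+1), (W k * x^k) * (W (n-k) * x^(n-k))) = x^n := by
      intro n
      have : ∀ k ∈ Finset.range (n+1), (W k * x^k) * (W (n-k) * x^(n-k))
          = (W k * W (n-k)) * x^n := by
        intro k hk
        rw [Finset.mem_range, Nat.lt_succ_iff] at hk
        rw [show (W k * x^k) * (W (n-k) * x^(n-k)) = (W k * W (n-k)) * (x^k * x^(n-k)) by ring,
          ← pow_add, Nat.add_sub_cancel' hk]
      rw [Finset.sum_congr rfl this, ← Finset.sum_mul, W_conv, one_mul]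
    rw [tsum_congr this, tsum_geometric_of_lt_one hx0 hx1]
  have hLpos : 0 < L := by
    have h0 : (1:ℝ) ≤ L := by
      have := hs.hasSum
      calc (1:ℝ) = W 0 * x^0 := by simp [W]
        _ ≤ L := Summable.le_tsum hs 0 (fun n _ => mul_nonneg (W_pos n).le (pow_nonneg hx0 n))
    linarith
  have h1x : 0 < 1 - x := by linarith
  have hLval : L = (1-x) ^ (-(1:ℝ)/2) := by
    have : L = Real.sqrt ((1-x)⁻¹) := by
      rw [← Real.sqrt_sq hLpos.le, ← hsq, sq]
    rw [this, Real.rpow_def_of_pos h1x]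
    rw [Real.sqrt_eq_rpow, Real.rpow_def_of_pos (by positivity), Real.log_inv]
    ring_nf
  rw [← hLval]
  exact hs.hasSum

lemma wallis (n : ℕ) : ∫ x in (0:ℝ)..(π/2), Real.sin x ^ (2*n) = π/2 * W n := by
  have hcont : ∀ a b : ℝ, IntervalIntegrable (fun x => Real.sin x ^ (2*n)) MeasureTheory.volume a b :=
    fun a b => (Real.continuous_sin.pow _).intervalIntegrable a b
  have hsplit : (∫ x in (0:ℝ)..π, Real.sin x ^ (2*n))
      = (∫ x in (0:ℝ)..(π/2), Real.sin x ^ (2*n)) + ∫ x in (π/2:ℝ)..π, Real.sin x ^ (2*n) := by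
    rw [integral_add_adjacent_intervals (hcont 0 (π/2)) (hcont (π/2) π)]
  have hrefl : (∫ x in (π/2:ℝ)..π, Real.sin x ^ (2*n))
      = ∫ x in (0:ℝ)..(π/2), Real.sin x ^ (2*n) := by
    have := intervalIntegral.integral_comp_sub_left (a := 0) (b := π/2)
      (fun x => Real.sin x ^ (2*n)) π
    simp only [Real.sin_pi_sub] at this
    rw [this]
    norm_num [show π - π/2 = π/2 by ring]
  have hval : (∫ x in (0:ℝ)..π, Real.sin x ^ (2*n)) = π * W n := by
    rw [integral_sin_pow_even]; rfl
  rw [hrefl] at hsplit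
  rw [hval] at hsplit
  linarith

lemma ellipticK_series {t : ℝ} (ht0 : 0 ≤ t) (ht1 : t < 1) :
    ellipticK t = π/2 * ∑' n : ℕ, W n ^ 2 * t ^ n := by
  have hpi : (0:ℝ) ≤ π/2 := by positivity
  set F : ℕ → ℝ → ℝ := fun n θ => W n * (t * Real.sin θ ^ 2) ^ n with hF
  have hx : ∀ θ : ℝ, 0 ≤ t * Real.sin θ ^ 2 ∧ t * Real.sin θ ^ 2 < 1 := by
    intro θ
    constructor
    · positivity
    · calc t * Real.sin θ ^ 2 ≤ t * 1 := by
            apply mul_le_mul_of_nonneg_left _ ht0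
            rw [show (1:ℝ) = 1^2 by norm_num]
            apply sq_le_sq' <;> [linarith [Real.neg_one_le_sin θ]; exact Real.sin_le_one θ]
        _ < 1 := by linarith
  have hpt : ∀ θ : ℝ, (1 - t * Real.sin θ ^ 2) ^ (-(1:ℝ)/2) = ∑' n, F n θ := by
    intro θ
    exact ((hasSum_W (hx θ).1 (hx θ).2).tsum_eq).symm
  have hμ : (MeasureTheory.volume (Set.Ioc (0:ℝ) (π/2))).toReal = π/2 := by
    simp [Real.volume_Ioc, hpi]
  have hInt : ∀ n, IntegrableOn (F n) (Set.Ioc (0:ℝ) (π/2)) volume := by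
    intro n
    apply Continuous.integrableOn_Ioc
    continuity
  have hFnorm : ∀ n, ∀ θ, ‖F n θ‖ ≤ t ^ n := by
    intro n θ
    rw [Real.norm_of_nonneg (mul_nonneg (W_pos n).le (pow_nonneg (hx θ).1 n))]
    calc W n * (t * Real.sin θ ^ 2) ^ n ≤ 1 * (t * Real.sin θ ^ 2) ^ n :=
          mul_le_mul_of_nonneg_right (W_le_one n) (pow_nonneg (hx θ).1 n)
      _ = (t * Real.sin θ ^ 2) ^ n := one_mul _
      _ ≤ t ^ n := by
          apply pow_le_pow_left₀ (hx θ).1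
          calc t * Real.sin θ ^ 2 ≤ t * 1 := by
                apply mul_le_mul_of_nonneg_left _ ht0
                rw [show (1:ℝ) = 1^2 by norm_num]
                apply sq_le_sq' <;> [linarith [Real.neg_one_le_sin θ]; exact Real.sin_le_one θ]
            _ = t := mul_one t
  have hSum : Summable (fun n => ∫ θ in Set.Ioc (0:ℝ) (π/2), ‖F n θ‖) := by
    apply Summable.of_nonneg_of_le
      (fun n => integral_nonneg (fun θ => norm_nonneg _))
      (fun n => ?_)
      ((summable_geometric_of_lt_one ht0 ht1).mul_left (π/2))
    calc (∫ θ in Set.Ioc (0:ℝ) (π/2), ‖F n θ‖)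
        ≤ t^n * (volume (Set.Ioc (0:ℝ) (π/2))).toReal := by
          have := MeasureTheory.norm_setIntegral_le_of_norm_le_const
            (μ := volume) (s := Set.Ioc (0:ℝ) (π/2)) (C := t^n)
            (by rw [Real.volume_Ioc]; exact ENNReal.ofReal_lt_top)
            (f := fun θ => ‖F n θ‖) (fun θ _ => by
              rw [norm_norm]; exact hFnorm n θ)
          calc (∫ θ in Set.Ioc (0:ℝ) (π/2), ‖F n θ‖)
              ≤ ‖∫ θ in Set.Ioc (0:ℝ) (π/2), ‖F n θ‖‖ := le_abs_self _
            _ ≤ t^n * (volume (Set.Ioc (0:ℝ) (π/2))).toReal := this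
      _ = π/2 * t^n := by rw [hμ]; ring
  have hswap : (∫ θ in Set.Ioc (0:ℝ) (π/2), ∑' n, F n θ) = ∑' n, ∫ θ in Set.Ioc (0:ℝ) (π/2), F n θ :=
    (MeasureTheory.integral_tsum_of_summable_integral_norm hInt hSum).symm
  have hterm : ∀ n, (∫ θ in Set.Ioc (0:ℝ) (π/2), F n θ) = π/2 * (W n ^2 * t^n) := by
    intro n
    have : (∫ θ in Set.Ioc (0:ℝ) (π/2), F n θ)
        = ∫ θ in (0:ℝ)..(π/2), W n * t^n * Real.sin θ ^ (2*n) := by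
      rw [intervalIntegral.integral_of_le hpi]
      apply setIntegral_congr_fun measurableSet_Ioc
      intro θ _
      simp only [hF, mul_pow, pow_mul]
      ring
    rw [this, intervalIntegral.integral_const_mul, wallis]
    ring
  have : ellipticK t = ∫ θ in Set.Ioc (0:ℝ) (π/2), ∑' n, F n θ := by
    rw [ellipticK, intervalIntegral.integral_of_le hpi]
    apply setIntegral_congr_fun measurableSet_Ioc
    intro θ _
    exact hpt θ
  rw [this, hswap, tsum_congr hterm, tsum_mul_left]

lemma log_pow_bound {t : ℝ} (ht0 : 0 < t) (ht1 : t ≤ 1) (k : ℕ) :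
    |Real.log t| ^ k ≤ (2*(k:ℝ))^k * t ^ (-(1:ℝ)/2) := by
  rcases Nat.eq_zero_or_pos k with hk | hk
  · subst hk
    simp only [pow_zero, one_mul]
    rw [show (-(1:ℝ)/2) = -(1/2) by ring, Real.rpow_neg ht0.le]
    rw [le_inv_comm₀ one_pos (Real.rpow_pos_of_pos ht0 _)]
    calc t ^ ((1:ℝ)/2) ≤ 1 ^ ((1:ℝ)/2) := Real.rpow_le_rpow ht0.le ht1 (by norm_num)
      _ = 1⁻¹ := by norm_num
  · have hkR : (0:ℝ) < k := by exact_mod_cast hk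
    have hlog : |Real.log t| ≤ 2*(k:ℝ) * t ^ (-(1:ℝ)/(2*k)) := by
      rw [abs_of_nonpos (Real.log_nonpos ht0.le ht1), ← Real.log_inv]
      have := Real.log_le_rpow_div (x := t⁻¹) (ε := 1/(2*k)) (by positivity) (by positivity)
      calc Real.log t⁻¹ ≤ (t⁻¹) ^ ((1:ℝ)/(2*k)) / (1/(2*k)) := this
        _ = 2*(k:ℝ) * t ^ (-(1:ℝ)/(2*k)) := by
            rw [show -(1:ℝ)/(2*(k:ℝ)) = -(1/(2*(k:ℝ))) by ring, Real.inv_rpow ht0.le,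
              ← Real.rpow_neg ht0.le, div_eq_mul_inv, one_div, inv_inv, mul_comm]
    calc |Real.log t| ^ k ≤ (2*(k:ℝ) * t ^ (-(1:ℝ)/(2*k))) ^ k := by
          apply pow_le_pow_left₀ (abs_nonneg _) hlog
      _ = (2*(k:ℝ))^k * t ^ (-(1:ℝ)/2) := by
          rw [mul_pow, ← Real.rpow_natCast (t ^ (-(1:ℝ)/(2*k))) k, ← Real.rpow_mul ht0.le]
          congr 2
          field_simp

lemma logIntegrable (k n : ℕ) :
    IntervalIntegrable (fun t => t^n * Real.log t ^ k) volume (0:ℝ) 1 := by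
  have hbig : IntervalIntegrable (fun t : ℝ => (2*(k:ℝ))^k * t ^ (-(1:ℝ)/2)) volume 0 1 :=
    (intervalIntegral.intervalIntegrable_rpow' (by norm_num)).const_mul _
  rw [intervalIntegrable_iff] at hbig ⊢
  apply MeasureTheory.Integrable.mono hbig
  · apply Measurable.aestronglyMeasurable
    exact (measurable_id.pow_const n).mul (Real.measurable_log.pow_const k)
  · rw [Set.uIoc_of_le (by norm_num : (0:ℝ) ≤ 1)]
    filter_upwards [ae_restrict_mem measurableSet_Ioc] with t ht
    rw [Real.norm_of_nonneg (mul_nonneg (pow_nonneg (by positivity) k)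
      (Real.rpow_nonneg ht.1.le _))]
    rw [Real.norm_eq_abs, abs_mul, abs_pow, abs_pow]
    calc |t|^n * |Real.log t|^k ≤ 1 * |Real.log t|^k := by
          apply mul_le_mul_of_nonneg_right _ (by positivity)
          apply pow_le_one₀ (abs_nonneg _)
          rw [abs_of_pos ht.1]; exact ht.2
      _ = |Real.log t|^k := one_mul _
      _ ≤ (2*(k:ℝ))^k * t ^ (-(1:ℝ)/2) := log_pow_bound ht.1 ht.2 k

lemma tendsto_pow_mul_log_pow (m k : ℕ) :
    Tendsto (fun t : ℝ => t^(m+1) * Real.log t ^ k) (nhdsWithin 0 (Set.Ioi 0)) (nhds 0) := by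
  rcases Nat.eq_zero_or_pos k with hk | hk
  · subst hk
    simp only [pow_zero, mul_one]
    have : Tendsto (fun t : ℝ => t^(m+1)) (nhds 0) (nhds 0) := by
      simpa using (continuous_pow (m+1)).tendsto (0:ℝ)
    exact this.mono_left nhdsWithin_le_nhds
  · have hkR : (0:ℝ) < k := by exact_mod_cast hk
    have ha : (0:ℝ) < ((m:ℝ)+1)/k := by positivity
    have h0 := (tendsto_log_mul_rpow_nhdsGT_zero ha).pow k
    rw [show (0:ℝ)^k = 0 by exact zero_pow hk.ne'] at h0
    apply h0.congr'
    filter_upwards [self_mem_nhdsWithin] with t (ht : 0 < t)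
    rw [mul_pow, ← Real.rpow_natCast (t ^ (((m:ℝ)+1)/k)) k, ← Real.rpow_mul ht.le]
    rw [div_mul_cancel₀ _ (by positivity : ((k:ℕ):ℝ) ≠ 0)]
    rw [show ((m:ℝ)+1) = ((m+1 : ℕ) : ℝ) by push_cast; ring, Real.rpow_natCast]
    ring

lemma logInt (k n : ℕ) : ∫ t in (0:ℝ)..1, t^n * Real.log t ^ k
    = (-1)^k * (k.factorial : ℝ) / ((n:ℝ)+1)^(k+1) := by
  induction k with
  | zero => simp [integral_pow]
  | succ k ih =>
    have hne : ((n:ℝ)+1) ≠ 0 := by positivity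
    -- integration by parts via explicit primitive G
    set G : ℝ → ℝ := fun t => t^(n+1)/((n:ℝ)+1) * Real.log t ^ (k+1) with hG
    have hderiv : ∀ x ∈ Set.Ioo (0:ℝ) 1, HasDerivAt G
        (x^n * Real.log x ^ (k+1) + (((k:ℝ)+1)/((n:ℝ)+1)) * (x^n * Real.log x ^ k)) x := by
      intro x hx
      have hx0 : x ≠ 0 := hx.1.ne'
      have h1 : HasDerivAt (fun t : ℝ => t^(n+1)/((n:ℝ)+1)) (x^n) x := by
        have := (hasDerivAt_pow (n+1) x).div_const ((n:ℝ)+1)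
        rw [show (x:ℝ)^n = x^n * ((↑n+1)/(↑n+1)) by field_simp]
        refine this.congr_deriv ?_
        push_cast
        ring
      have h2 : HasDerivAt (fun t : ℝ => Real.log t ^ (k+1))
          (((k:ℝ)+1) * Real.log x ^ k * x⁻¹) x := by
        have := ((Real.hasDerivAt_log hx0).pow (k+1))
        simpa [Nat.cast_add, Pi.pow_def] using this
      have := h1.fun_mul h2
      refine this.congr_deriv ?_
      field_simp
      ring
    have hlim1 : Tendsto G (nhdsWithin 1 (Set.Iio 1)) (nhds 0) := by
      have hc : ContinuousAt G 1 := by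
        apply ContinuousAt.mul
        · exact (continuousAt_pow _ _).div_const _
        · exact (Real.continuousAt_log one_ne_zero).pow _
      have : G 1 = 0 := by simp [hG]
      rw [← this]
      exact hc.continuousWithinAt.tendsto
    have hlim0 : Tendsto G (nhdsWithin 0 (Set.Ioi 0)) (nhds 0) := by
      have := (tendsto_pow_mul_log_pow n (k+1)).div_const ((n:ℝ)+1)
      rw [zero_div] at this
      apply this.congr
      intro t; simp [hG]; ring
    have hintG : IntervalIntegrable (fun x => x^n * Real.log x ^ (k+1)
        + (((k:ℝ)+1)/((n:ℝ)+1)) * (x^n * Real.log x ^ k)) volume 0 1 :=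
      (logIntegrable (k+1) n).add ((logIntegrable k n).const_mul _)
    have hFTC := intervalIntegral.integral_eq_sub_of_hasDerivAt_of_tendsto
      (by norm_num : (0:ℝ) < 1) hderiv hintG hlim0 hlim1
    rw [sub_zero] at hFTC
    rw [intervalIntegral.integral_add (logIntegrable (k+1) n)
      ((logIntegrable k n).const_mul _), intervalIntegral.integral_const_mul, ih] at hFTC
    have : (∫ t in (0:ℝ)..1, t^n * Real.log t ^ (k+1))
        = - (((k:ℝ)+1)/((n:ℝ)+1)) * ((-1)^k * (k.factorial:ℝ) / ((n:ℝ)+1)^(k+1)) := by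
      linarith [hFTC]
    rw [this]
    rw [Nat.factorial_succ]
    push_cast
    field_simp
    ring

/-- For every `r ≥ 1`,
`₍ᵣ₊₃₎F₍ᵣ₊₂₎({1}_{r+1}, 3/2, 3/2; {2}_{r+2}; 1)
  = (8(−1)^{r−1}/(π (r−1)!)) ∫₀¹ (K(t) − π/2) log^{r−1}(t)/t dt`. -/
theorem ellipticK_rep (r : ℕ) (hr : 1 ≤ r) :
    hyp (List.replicate (r + 1) (1 : ℝ) ++ [3 / 2, 3 / 2]) (List.replicate (r + 2) (2 : ℝ)) 1 =
      8 * (-1) ^ (r - 1) / (π * ((r - 1).factorial : ℝ)) *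
        ∫ t in (0:ℝ)..1, (ellipticK t - π / 2) * Real.log t ^ (r - 1) / t := by

  obtain ⟨k, rfl⟩ : ∃ k, r = k + 1 := ⟨r-1, (Nat.succ_pred_eq_of_pos hr).symm⟩
  rw [Nat.add_sub_cancel]
  -- the common value
  set g : ℕ → ℝ := fun n => W (n+1)^2 / ((n:ℝ)+1)^(k+1) with hg
  -- LHS
  have hLHS : hyp (List.replicate (k + 1 + 1) (1 : ℝ) ++ [3 / 2, 3 / 2])
      (List.replicate (k + 1 + 2) (2 : ℝ)) 1 = 4 * ∑' n, g n := by
    rw [hyp, ← tsum_mul_left]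
    apply tsum_congr
    intro n
    have hA : ((n.factorial : ℝ)) ≠ 0 := Nat.cast_ne_zero.mpr n.factorial_ne_zero
    have hB : ((n:ℝ)+1) ≠ 0 := by positivity
    have hfs : ((n+1).factorial : ℝ) = ((n:ℝ)+1) * (n.factorial : ℝ) := by
      rw [Nat.factorial_succ]; push_cast; ring
    simp only [List.map_append, List.map_replicate, List.prod_append, List.prod_replicate,
      List.map_cons, List.prod_cons, List.map_nil, List.prod_nil, poch_one, poch_two,
      poch_threehalf, one_pow, mul_one]
    rw [hfs, mul_pow ((n:ℝ)+1) (n.factorial:ℝ), hg]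
    have hW := W_pos (n+1)
    field_simp
    ring
  -- the integrand as a series
  set F : ℕ → ℝ → ℝ := fun n t => (π/2) * W (n+1)^2 * (t^n * Real.log t ^ k) with hF
  have hptwise : ∀ t ∈ Set.Ioo (0:ℝ) 1,
      (ellipticK t - π / 2) * Real.log t ^ k / t = ∑' n, F n t := by
    rintro t ⟨ht0, ht1⟩
    have hsum : Summable (fun n => W n ^2 * t^n) := by
      apply Summable.of_nonneg_of_le
        (fun n => mul_nonneg (sq_nonneg _) (pow_nonneg ht0.le n))
        (fun n => ?_) (summable_geometric_of_lt_one ht0.le ht1)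
      calc W n^2 * t^n ≤ 1 * t^n := by
            apply mul_le_mul_of_nonneg_right _ (pow_nonneg ht0.le n)
            nlinarith [W_pos n, W_le_one n]
        _ = t^n := one_mul _
    have hK : ellipticK t - π/2 = π/2 * ∑' n, W (n+1)^2 * t^(n+1) := by
      rw [ellipticK_series ht0.le ht1, Summable.tsum_eq_zero_add hsum]
      have hW0 : W 0 = 1 := by simp [W]
      rw [hW0, one_pow, pow_zero, one_mul, mul_add, mul_one, add_sub_cancel_left]
    rw [hK, show (π/2 * ∑' n, W (n+1)^2 * t^(n+1)) * Real.log t ^ k / t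
        = (∑' n, W (n+1)^2 * t^(n+1)) * (π/2 * Real.log t ^ k / t) by ring,
      ← tsum_mul_right]
    apply tsum_congr
    intro n
    simp only [hF]
    rw [pow_succ]
    field_simp
    ring
  -- integrability on Ioo
  have hIoo : ∀ n, IntegrableOn (F n) (Set.Ioo (0:ℝ) 1) volume := by
    intro n
    have h1 := ((logIntegrable k n).const_mul ((π/2) * W (n+1)^2))
    rw [intervalIntegrable_iff, Set.uIoc_of_le (by norm_num : (0:ℝ) ≤ 1)] at h1
    exact h1.mono_set Set.Ioo_subset_Ioc_self
  -- value of the integral of each term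
  have hvalIoo : ∀ n : ℕ, ∫ t in Set.Ioo (0:ℝ) 1, t^n * Real.log t ^ k
      = (-1)^k * (k.factorial : ℝ) / ((n:ℝ)+1)^(k+1) := by
    intro n
    rw [← MeasureTheory.integral_Ioc_eq_integral_Ioo,
      ← intervalIntegral.integral_of_le (by norm_num : (0:ℝ) ≤ 1), logInt]
  have hterm : ∀ n, ∫ t in Set.Ioo (0:ℝ) 1, F n t
      = (π/2) * W (n+1)^2 * ((-1)^k * (k.factorial : ℝ) / ((n:ℝ)+1)^(k+1)) := by
    intro n
    simp only [hF]
    rw [MeasureTheory.integral_const_mul, hvalIoo]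
  -- norm integrals
  have hnorm : ∀ n, (∫ t in Set.Ioo (0:ℝ) 1, ‖F n t‖)
      = (π/2) * W (n+1)^2 * ((k.factorial : ℝ) / ((n:ℝ)+1)^(k+1)) := by
    intro n
    have hcong : ∀ t ∈ Set.Ioo (0:ℝ) 1,
        ‖F n t‖ = ((π/2) * W (n+1)^2 * (-1:ℝ)^k) * (t^n * Real.log t ^ k) := by
      rintro t ⟨ht0, ht1⟩
      simp only [hF]
      rw [Real.norm_eq_abs, abs_mul, abs_mul, abs_mul, abs_pow, abs_pow, abs_pow,
        abs_of_nonneg ht0.le, abs_of_nonpos (Real.log_nonpos ht0.le ht1.le),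
        abs_of_nonneg (by positivity : (0:ℝ) ≤ π/2),
        abs_of_nonneg ((W_pos (n+1)).le)]
      ring
    rw [MeasureTheory.setIntegral_congr_fun measurableSet_Ioo hcong,
      MeasureTheory.integral_const_mul, hvalIoo]
    rw [show ((π:ℝ)/2) * W (n+1)^2 * (-1:ℝ)^k * ((-1)^k * (k.factorial : ℝ) / ((n:ℝ)+1)^(k+1))
        = (π/2) * W (n+1)^2 * (((-1:ℝ)^k * (-1)^k) * ((k.factorial : ℝ) / ((n:ℝ)+1)^(k+1))) by ring]
    rw [← mul_pow]
    norm_num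
  have hSum : Summable (fun n => ∫ t in Set.Ioo (0:ℝ) 1, ‖F n t‖) := by
    have hs2 : Summable (fun n : ℕ => ((π:ℝ)/2) * (k.factorial : ℝ) * (1/((n:ℝ)+1)^2)) := by
      apply Summable.mul_left
      have h1 : Summable (fun n : ℕ => 1/((n:ℝ)^2)) := by
        have := Real.summable_one_div_nat_pow (p := 2) |>.mpr one_lt_two
        simpa using this
      have h2 := (summable_nat_add_iff 1).mpr h1
      apply h2.congr
      intro n
      push_cast
      ring
    apply Summable.of_nonneg_of_le
      (fun n => integral_nonneg (fun t => norm_nonneg _)) (fun n => ?_) hs2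
    rw [hnorm n]
    have hP : (1:ℝ) ≤ (n:ℝ)+1 := by
      have := Nat.cast_nonneg (α := ℝ) n; linarith
    have hPp : (0:ℝ) < (n:ℝ)+1 := by positivity
    have h2 : W (n+1)^2 ≤ 1/((n:ℝ)+1) := by
      have := W_sq_le (n+1)
      push_cast at this
      refine this.trans ?_
      apply one_div_le_one_div_of_le hPp
      linarith
    have key : W (n+1)^2 / ((n:ℝ)+1)^(k+1) ≤ 1/((n:ℝ)+1)^2 := by
      have h3 : ((n:ℝ)+1)^2 ≤ ((n:ℝ)+1)^(k+2) := pow_le_pow_right₀ hP (by omega)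
      calc W (n+1)^2 / ((n:ℝ)+1)^(k+1) ≤ (1/((n:ℝ)+1)) / ((n:ℝ)+1)^(k+1) := by
            gcongr
        _ = 1/((n:ℝ)+1)^(k+2) := by
            rw [div_div, ← pow_succ']
        _ ≤ 1/((n:ℝ)+1)^2 := by
            apply one_div_le_one_div_of_le (by positivity) h3
    calc (π/2) * W (n+1)^2 * ((k.factorial : ℝ) / ((n:ℝ)+1)^(k+1))
        = ((π/2) * (k.factorial : ℝ)) * (W (n+1)^2 / ((n:ℝ)+1)^(k+1)) := by ring
      _ ≤ ((π/2) * (k.factorial : ℝ)) * (1/((n:ℝ)+1)^2) := by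
          apply mul_le_mul_of_nonneg_left key
          positivity
      _ = ((π:ℝ)/2) * (k.factorial : ℝ) * (1/((n:ℝ)+1)^2) := by ring
  have hswap := MeasureTheory.integral_tsum_of_summable_integral_norm hIoo hSum
  have hInt : (∫ t in (0:ℝ)..1, (ellipticK t - π / 2) * Real.log t ^ k / t)
      = ∑' n, ∫ t in Set.Ioo (0:ℝ) 1, F n t := by
    rw [intervalIntegral.integral_of_le (by norm_num : (0:ℝ) ≤ 1),
      MeasureTheory.integral_Ioc_eq_integral_Ioo,
      MeasureTheory.setIntegral_congr_fun measurableSet_Ioo hptwise, ← hswap]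
  rw [hLHS, hInt, tsum_congr hterm]
  have hre : ∀ n : ℕ, (π/2) * W (n+1)^2 * ((-1)^k * (k.factorial:ℝ)/((n:ℝ)+1)^(k+1))
      = ((π/2) * (-1:ℝ)^k * (k.factorial:ℝ)) * g n := by
    intro n
    simp only [hg]
    ring
  rw [tsum_congr hre, tsum_mul_left]
  have hpi : (π:ℝ) ≠ 0 := Real.pi_ne_zero
  have hfac : (k.factorial:ℝ) ≠ 0 := Nat.cast_ne_zero.mpr k.factorial_ne_zero
  have hsign : ((-1:ℝ)^k) * ((-1:ℝ)^k) = 1 := by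
    rw [← mul_pow]; norm_num
  rw [show (8:ℝ) * (-1)^k / (π * (k.factorial:ℝ))
      * ((π/2) * (-1:ℝ)^k * (k.factorial:ℝ) * ∑' n, g n)
      = (((-1:ℝ)^k * (-1)^k) * (8 * (π/2) * (k.factorial:ℝ) / (π * (k.factorial:ℝ))))
        * ∑' n, g n by ring, hsign]
  field_simp
  ring
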